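/- Let R be a commutative Bezout domain and let a be an almost zip element of R (i.e., R/rad(aR) is a zip ring, where rad(aR) is the radical of the ideal aR). Then there are only finitely many prime ideals of R minimal over aR. -/
import Mathlib


/-- A commutative ring is *zip* if every ideal with zero annihilator contains a
finitely generated subideal with zero annihilator. -/
def IsZipRing (R : Type*) [CommRing R] : Prop :=
  ∀ I : Ideal R, Submodule.annihilator I = ⊥ →
    ∃ I₀ : Ideal R, I₀ ≤ I ∧ I₀.FG ∧ Submodule.annihilator I₀ = ⊥

/-- If `z * c = 0` then `z` annihilates the principal ideal generated by `c`. -/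
lemma mem_ann_span_singleton {S : Type*} [CommRing S] {z c : S} (h : z * c = 0) :
    z ∈ Submodule.annihilator (Ideal.span {c} : Ideal S) := by
  rw [Submodule.mem_annihilator]
  intro n hn
  obtain ⟨d, rfl⟩ := Ideal.mem_span_singleton'.mp hn
  rw [smul_eq_mul, show z * (d * c) = d * (z * c) by ring, h, mul_zero]

/-- An element of a minimal prime of a commutative ring is a zero divisor. -/
lemma exists_ne_zero_mul_eq_zero_of_mem_minimalPrimes {S : Type*} [CommRing S]
    {q : Ideal S} (hq : q ∈ minimalPrimes S) {c : S} (hc : c ∈ q) :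
    ∃ z : S, z ≠ 0 ∧ z * c = 0 := by
  haveI hqp : q.IsPrime := hq.1.1
  set L := Localization.AtPrime q with hL
  have hx : ∀ p : Ideal L, p.IsPrime → algebraMap S L c ∈ p := by
    intro p hp
    haveI := hp
    have hJ : p.comap (algebraMap S L) ≤ q := by
      intro y hy
      by_contra hyq
      exact hp.ne_top (p.eq_top_of_isUnit_mem hy
        (IsLocalization.map_units L (⟨y, hyq⟩ : q.primeCompl)))
    have hle : q ≤ p.comap (algebraMap S L) :=
      hq.2 ⟨Ideal.IsPrime.comap _, bot_le⟩ hJ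
    exact hle hc
  have hnil : IsNilpotent (algebraMap S L c) := by
    rw [← mem_nilradical, nilradical_eq_sInf]
    exact Submodule.mem_sInf.2 fun p hp => hx p hp
  obtain ⟨n, hn⟩ := hnil
  rw [← map_pow] at hn
  obtain ⟨m, hm⟩ := (IsLocalization.map_eq_zero_iff q.primeCompl L _).mp hn
  have hmq : (m : S) ∉ q := m.2
  have key : ∀ k : ℕ, ∀ y : S, y ∉ q → y * c ^ k = 0 → ∃ z : S, z ≠ 0 ∧ z * c = 0 := by
    intro k
    induction k with
    | zero =>
      intro y hy h
      rw [pow_zero, mul_one] at h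
      exact absurd (h ▸ q.zero_mem) hy
    | succ k ih =>
      intro y hy h
      by_cases h' : y * c ^ k = 0
      · exact ih y hy h'
      · exact ⟨y * c ^ k, h', by rw [mul_assoc, ← pow_succ]; exact h⟩
  exact key n m hmq hm

/-- The annihilator of a minimal prime is contained in every other minimal prime. -/
lemma ann_le_of_ne {S : Type*} [CommRing S] {q p : Ideal S}
    (hq : q ∈ minimalPrimes S) (hp : p ∈ minimalPrimes S) (hne : q ≠ p) :
    Submodule.annihilator q ≤ p := by
  haveI hpp : p.IsPrime := hp.1.1
  have hqsub : ¬ q ≤ p := fun h => hne (le_antisymm h (hp.2 ⟨hq.1.1, bot_le⟩ h))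
  obtain ⟨y, hyq, hyp⟩ := SetLike.not_le_iff_exists.mp hqsub
  intro z hz
  have hzy : z * y = 0 := by
    have := Submodule.mem_annihilator.mp hz y hyq
    rwa [smul_eq_mul] at this
  rcases hpp.mem_or_mem (show z * y ∈ p from hzy ▸ p.zero_mem) with h | h
  · exact h
  · exact absurd h hyp

/-- The intersection of the minimal primes of a reduced ring is zero. -/
lemma sInf_minimalPrimes_eq_bot {S : Type*} [CommRing S] [IsReduced S] :
    sInf (minimalPrimes S) = ⊥ := by
  have h : sInf ((⊥ : Ideal S).minimalPrimes) = (⊥ : Ideal S).radical :=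
    Ideal.sInf_minimalPrimes
  rw [minimalPrimes, h]
  have : (⊥ : Ideal S).radical = nilradical S := rfl
  rw [this, nilradical_eq_zero, Ideal.zero_eq_bot]

/-- A reduced Bezout-quotient-like zip ring has finitely many minimal primes. -/
lemma minimalPrimes_finite_of_zip {S : Type*} [CommRing S] [IsReduced S] [IsBezout S]
    (hz : IsZipRing S) : (minimalPrimes S).Finite := by
  by_contra hfin
  have hinf : (minimalPrimes S).Infinite := hfin
  -- every element in all minimal primes is zero
  have hsInf : ∀ x : S, (∀ q ∈ minimalPrimes S, x ∈ q) → x = 0 := by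
    intro x hx
    have : x ∈ sInf (minimalPrimes S) := Submodule.mem_sInf.2 hx
    rwa [sInf_minimalPrimes_eq_bot, Ideal.mem_bot] at this
  by_cases hA : ∀ q ∈ minimalPrimes S, Submodule.annihilator q ≠ ⊥
  · -- all annihilators nonzero
    set I : Ideal S := ⨆ q : minimalPrimes S, Submodule.annihilator (q : Ideal S) with hI
    -- pick for each minimal prime a nonzero annihilating element outside the prime
    have hpick : ∀ q : Ideal S, q ∈ minimalPrimes S →
        ∃ z : S, z ∈ Submodule.annihilator q ∧ z ∉ q := by
      intro q hq
      obtain ⟨z, hz, hz0⟩ := Submodule.exists_mem_ne_zero_of_ne_bot (hA q hq)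
      refine ⟨z, hz, fun hzq => hz0 ?_⟩
      have : z * z = 0 := by
        have := Submodule.mem_annihilator.mp hz z hzq
        rwa [smul_eq_mul] at this
      have : z ^ 2 = 0 := by rw [sq]; exact this
      exact IsReduced.eq_zero z ⟨2, this⟩
    have hannI : Submodule.annihilator I = ⊥ := by
      rw [eq_bot_iff]
      intro x hx
      rw [Ideal.mem_bot]
      apply hsInf
      intro q hq
      obtain ⟨z, hz, hzq⟩ := hpick q hq
      have hzI : z ∈ I := Submodule.mem_iSup_of_mem ⟨q, hq⟩ hz
      have hxz : x * z = 0 := by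
        have := Submodule.mem_annihilator.mp hx z hzI
        rwa [smul_eq_mul] at this
      have hqp : q.IsPrime := hq.1.1
      rcases hqp.mem_or_mem (show x * z ∈ q from hxz ▸ q.zero_mem) with h | h
      · exact h
      · exact absurd h hzq
    obtain ⟨I₀, hI₀le, hI₀fg, hI₀ann⟩ := hz I hannI
    obtain ⟨c, rfl⟩ := (IsBezout.isPrincipal_of_FG I₀ hI₀fg).1
    have hcI : c ∈ I := hI₀le (Ideal.subset_span rfl)
    obtain ⟨t, ht⟩ := Submodule.mem_iSup_iff_exists_finset.mp hcI
    -- pick a minimal prime not among the finitely many indices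
    have himg : ((fun q : minimalPrimes S => (q : Ideal S)) '' ↑t).Finite :=
      (t.finite_toSet.image _)
    obtain ⟨q', hq', hq'img⟩ := (hinf.diff himg).nonempty
    obtain ⟨w, hw, hwq'⟩ := hpick q' hq'
    have hw0 : w ≠ 0 := fun h => hwq' (h ▸ q'.zero_mem)
    -- show c annihilates w
    have hcw : c * w = 0 := by
      have hle : (⨆ i ∈ t, Submodule.annihilator ((i : minimalPrimes S) : Ideal S)) ≤
          Submodule.annihilator (Ideal.span {w} : Ideal S) := by
        refine iSup_le fun i => iSup_le fun hi => ?_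
        intro z hz
        apply mem_ann_span_singleton
        apply hsInf
        intro p hp
        have hpp : p.IsPrime := hp.1.1
        by_cases hpi : p = (i : Ideal S)
        · -- then p ≠ q', so w ∈ p
          have hpq' : (q' : Ideal S) ≠ p := by
            intro h
            exact hq'img ⟨i, hi, (h.trans hpi).symm⟩
          exact p.mul_mem_left z (ann_le_of_ne hq' hp hpq' hw)
        · -- z ∈ p
          have hz' : z ∈ p := ann_le_of_ne i.2 hp (fun h => hpi h.symm) hz
          exact p.mul_mem_right w hz'
      have := Submodule.mem_annihilator.mp (hle ht) w (Ideal.subset_span rfl)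
      rwa [smul_eq_mul] at this
    have hmem : w ∈ Submodule.annihilator (Ideal.span {c} : Ideal S) :=
      mem_ann_span_singleton (by rwa [mul_comm])
    have h2 : Submodule.annihilator (Ideal.span {c} : Ideal S) = ⊥ := hI₀ann
    rw [h2, Ideal.mem_bot] at hmem
    exact hw0 hmem
  · -- some minimal prime has zero annihilator
    push_neg at hA
    obtain ⟨q, hq, hqann⟩ := hA
    obtain ⟨I₀, hI₀le, hI₀fg, hI₀ann⟩ := hz q hqann
    obtain ⟨c, rfl⟩ := (IsBezout.isPrincipal_of_FG I₀ hI₀fg).1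
    have hcq : c ∈ q := hI₀le (Ideal.subset_span rfl)
    obtain ⟨z, hz0, hzc⟩ := exists_ne_zero_mul_eq_zero_of_mem_minimalPrimes hq hcq
    have hmem : z ∈ Submodule.annihilator (Ideal.span {c} : Ideal S) := mem_ann_span_singleton hzc
    have h2 : Submodule.annihilator (Ideal.span {c} : Ideal S) = ⊥ := hI₀ann
    rw [h2, Ideal.mem_bot] at hmem
    exact hz0 hmem

/-- If a is an almost zip element of a Bezout domain R, then there are
only finitely many primes minimal over aR. -/
theorem minimalPrimes_finite_of_almost_zip_element (R : Type*) [CommRing R] [IsDomain R]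
    [IsBezout R] (a : R) (ha : a ≠ 0) (hu : ¬ IsUnit a)
    (hz : IsZipRing (R ⧸ (Ideal.span {a} : Ideal R).radical)) :
    (Ideal.span {a} : Ideal R).minimalPrimes.Finite := by
  set J := (Ideal.span {a} : Ideal R).radical with hJ
  set S := R ⧸ J with hS
  haveI : IsReduced S :=
    (Ideal.isRadical_iff_quotient_reduced J).mp (Ideal.radical_isRadical _)
  haveI : IsBezout S :=
    Function.Surjective.isBezout (Ideal.Quotient.mk J) Ideal.Quotient.mk_surjective
  have hfin : (minimalPrimes S).Finite := minimalPrimes_finite_of_zip hz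
  have h1 : (Ideal.span {a} : Ideal R).minimalPrimes = J.minimalPrimes :=
    (Ideal.radical_minimalPrimes).symm
  rw [h1, Ideal.minimalPrimes_eq_comap]
  exact hfin.image _
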